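/- Under the divisive initial condition with ε > 0 and 0 < δ2 ≤ ε/(2n), the first-merging time T̄ = inf{ t : x_i(t) − x_1(t) ≤ ε for all i ∈ V_2 } is almost surely finite, i.e., P{T̄ < ∞} = 1. -/

import Mathlib

open MeasureTheory ProbabilityTheory Filter
open scoped ENNReal NNReal

/-- Neighbor set of agent `i` in the Hegselmann–Krause model with confidence threshold `ε`. -/
noncomputable def hkNbr {n : ℕ} (ε : ℝ) (x : Fin n → ℝ) (i : Fin n) : Finset (Fin n) :=
  Finset.univ.filter fun j => |x j - x i| ≤ ε

/-- Noisy HK update: agent `1` (index `0`) additionally receives the noise `ξ`. -/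
noncomputable def hkStep {n : ℕ} (ε : ℝ) (x : Fin n → ℝ) (ξ : ℝ) (i : Fin n) : ℝ :=
  (∑ j ∈ hkNbr ε x i, x j) / ((hkNbr ε x i).card : ℝ) + (if (i : ℕ) = 0 then ξ else 0)

set_option maxHeartbeats 4000000 in
/-- Under the divisive initial condition, the first-merging time
`T̄ = inf { t : x_i(t) - x_1(t) ≤ ε for all i ∈ V₂ }` is almost surely finite. -/
theorem hk_first_merging_time_finite
    {Ω : Type*} [MeasurableSpace Ω] (P : Measure Ω) [IsProbabilityMeasure P]
    (n : ℕ) (hn : 2 ≤ n) (ε δ1 δ2 : ℝ) (hε : 0 < ε)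
    (hδ1 : 0 ≤ δ1) (hδ12 : δ1 ≤ δ2) (hδ2pos : 0 < δ2) (hδ2 : δ2 ≤ ε / (2 * n))
    -- noise: `ξ t` is the noise injected at the update from time `t` to `t+1`
    (ξ : ℕ → Ω → ℝ) (hξmeas : ∀ t, Measurable (ξ t))
    (hindep : iIndepFun ξ P)
    (hunif : ∀ t, Measure.map (ξ t) P
      = (ENNReal.ofReal (δ1 + δ2))⁻¹ • volume.restrict (Set.Icc (-δ1) δ2))
    -- divisive initial condition
    (Nc : ℕ) (hNc2 : 2 ≤ Nc) (hNcn : Nc ≤ n)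
    (Vg : Fin Nc → Finset (Fin n))
    (hVne : ∀ g, (Vg g).Nonempty)
    (hVdisj : ∀ g h : Fin Nc, g ≠ h → Disjoint (Vg g) (Vg h))
    (hVcover : Finset.univ.biUnion Vg = (Finset.univ : Finset (Fin n)))
    (xs : Fin Nc → ℝ)
    (hgap : ∀ q p : Fin Nc, q < p → ε < xs p - xs q)
    (hagent1 : (⟨0, by omega⟩ : Fin n) ∈ Vg ⟨0, by omega⟩)
    -- trajectory
    (x : Ω → ℕ → Fin n → ℝ)
    (hx0 : ∀ ω, ∀ g : Fin Nc, ∀ i ∈ Vg g, x ω 0 i = xs g)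
    (hupd : ∀ ω t i, x ω (t + 1) i = hkStep ε (x ω t) (ξ t ω) i) :
    P {ω | ∃ t : ℕ, ∀ i ∈ Vg ⟨1, by omega⟩,
        x ω t i - x ω t ⟨0, by omega⟩ ≤ ε} = 1 := by
  -- ## Notation and basic facts
  set i0 : Fin n := ⟨0, by omega⟩ with hi0def
  set g0 : Fin Nc := ⟨0, by omega⟩ with hg0def
  set g1 : Fin Nc := ⟨1, by omega⟩ with hg1def
  have hg01 : g0 ≠ g1 := by simp [hg0def, hg1def, Fin.ext_iff]
  have hg0lt : g0 < g1 := by simp [hg0def, hg1def, Fin.lt_def]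
  have hi0mem : i0 ∈ Vg g0 := hagent1
  set w : ℝ := xs g0 with hwdef
  set z : ℝ := xs g1 with hzdef
  have hzw : ε < z - w := hgap g0 g1 hg0lt
  set k : ℕ := (Vg g0).card with hkdef
  set m : ℕ := (Vg g1).card with hmdef
  have hk1 : 1 ≤ k := Finset.card_pos.2 (hVne g0)
  have hm1 : 1 ≤ m := Finset.card_pos.2 (hVne g1)
  have hkm : k + m ≤ n := by
    have h := Finset.card_le_univ (Vg g0 ∪ Vg g1)
    rw [Finset.card_union_of_disjoint (hVdisj _ _ hg01)] at h
    simpa using h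
  set K : ℝ := (k : ℝ) with hKdef
  have hKpos : (0 : ℝ) < K := by rw [hKdef]; exact_mod_cast hk1
  have hK1 : (1 : ℝ) ≤ K := by rw [hKdef]; exact_mod_cast hk1
  have hKne : K ≠ 0 := ne_of_gt hKpos
  set N : ℝ := (n : ℝ) with hNdef
  have hN2 : (2 : ℝ) ≤ N := by rw [hNdef]; exact_mod_cast hn
  have hnpos : (0 : ℝ) < 2 * N := by linarith
  have hδ2n : δ2 * (2 * N) ≤ ε := (le_div_iff₀ hnpos).1 hδ2
  have hδ2ε : δ2 ≤ ε := by nlinarith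
  have hδ1ε : δ1 ≤ ε := le_trans hδ12 hδ2ε
  have hcl : ∀ j : Fin n, ∃ g, j ∈ Vg g := by
    intro j
    have : j ∈ Finset.univ.biUnion Vg := by rw [hVcover]; exact Finset.mem_univ j
    simpa using Finset.mem_biUnion.1 this
  have huniq : ∀ {j : Fin n} {g h : Fin Nc}, j ∈ Vg g → j ∈ Vg h → g = h := by
    intro j g h hg hh
    by_contra hne
    exact Finset.disjoint_left.1 (hVdisj g h hne) hg hh
  have hxsge : ∀ g : Fin Nc, g ≠ g0 → z ≤ xs g := by
    intro g hgne
    have h1le : g1 ≤ g := by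
      rcases Nat.lt_or_ge g.val 1 with h | h
      · exact absurd (Fin.ext (by simp [hg0def]; omega)) hgne
      · exact Fin.le_def.2 (by simpa [hg1def] using h)
    rcases eq_or_lt_of_le h1le with rfl | hlt
    · exact le_rfl
    · exact le_of_lt (by have := hgap g1 g hlt; rw [← hzdef] at this; linarith)
  have hsep : ∀ g h : Fin Nc, g ≠ h → ε < |xs h - xs g| := by
    intro g h hne
    rcases lt_trichotomy g h with hlt | heq | hlt
    · exact lt_of_lt_of_le (hgap g h hlt) (le_abs_self _)
    · exact absurd heq hne
    · have := hgap h g hlt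
      exact lt_of_lt_of_le (by linarith : ε < -(xs h - xs g)) (neg_le_abs _)
  have hmemne : ∀ {j : Fin n} {g : Fin Nc}, j ∈ Vg g → g ≠ g0 → j ≠ i0 := by
    intro j g hj hg hji
    exact hg (huniq (hji ▸ hj) hi0mem)
  have hki : ∀ j : Fin n, j ≠ i0 → ¬ ((j : ℕ) = 0) := fun j hj h0 => hj (Fin.ext h0)
  -- ## Deterministic dynamics
  have key : ∀ ω, (∀ s, ξ s ω ∈ Set.Icc (-δ1) δ2) →
      (∀ C : ℝ, ∃ t, C ≤ ∑ s ∈ Finset.range t, ξ s ω) →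
      ∃ t : ℕ, ∀ i ∈ Vg g1, x ω t i - x ω t i0 ≤ ε := by
    intro ω h1 h2
    obtain ⟨S, hS⟩ : ∃ S : ℕ → ℝ, ∀ t, S t = ∑ s ∈ Finset.range t, ξ s ω :=
      ⟨_, fun _ => rfl⟩
    obtain ⟨Y, hY⟩ : ∃ Y : ℕ → ℝ, ∀ t, Y t = w + S (t - 1) / K :=
      ⟨_, fun _ => rfl⟩
    obtain ⟨D, hD0, hDs⟩ : ∃ D : ℕ → ℝ, D 0 = 0 ∧ ∀ t, D (t+1) = ξ t ω :=
      ⟨fun t => if t = 0 then 0 else ξ (t-1) ω, rfl, fun t => by simp⟩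
    have hS0 : S 0 = 0 := by rw [hS]; simp
    have hSs : ∀ t, S (t+1) = S t + ξ t ω := by
      intro t
      rw [hS, hS, Finset.sum_range_succ]
    have hY0 : Y 0 = w := by rw [hY 0]; simp [hS0]
    have hY1 : Y 1 = w := by rw [hY 1]; simp [hS0]
    have hYs : ∀ t, Y (t+2) = w + S (t+1) / K := fun t => by rw [hY (t+2)]; norm_num
    have hDb : ∀ t, -δ1 ≤ D t ∧ D t ≤ δ2 := by
      intro t
      rcases t with _ | t
      · rw [hD0]; exact ⟨by linarith, by linarith⟩
      · rw [hDs t]; exact ⟨(h1 t).1, (h1 t).2⟩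
    have hDabs : ∀ t, |D t| ≤ ε :=
      fun t => abs_le.2 ⟨by linarith [(hDb t).1], by linarith [(hDb t).2]⟩
    -- position of an arbitrary agent under a "cluster configuration"
    have hposGen : ∀ (t : ℕ) (y d : ℝ),
        (∀ j ∈ Vg g0, j ≠ i0 → x ω t j = y) → (x ω t i0 = y + d) →
        (∀ g, g ≠ g0 → ∀ i ∈ Vg g, x ω t i = xs g) →
        ∀ (j : Fin n) (g : Fin Nc), j ∈ Vg g →
          x ω t j = if g = g0 then (if j = i0 then y + d else y) else xs g := by
      intro t y d hA hB hC j g hj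
      by_cases hgg : g = g0
      · subst hgg
        by_cases hji : j = i0
        · subst hji; simp [hB]
        · simp [hji, hA j hj hji]
      · simp [hgg, hC g hgg j hj]
    -- neighbourhood of a member of cluster 0 which is far from cluster 1
    have hnbrMem0 : ∀ (t : ℕ) (y d : ℝ),
        (∀ j ∈ Vg g0, j ≠ i0 → x ω t j = y) → (x ω t i0 = y + d) →
        (∀ g, g ≠ g0 → ∀ i ∈ Vg g, x ω t i = xs g) → |d| ≤ ε →
        ∀ j1 ∈ Vg g0, ε < z - x ω t j1 → hkNbr ε (x ω t) j1 = Vg g0 := by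
      intro t y d hA hB hC hd j1 hj1 hfar
      have hpos := hposGen t y d hA hB hC
      have hx1 : x ω t j1 = y + d ∨ x ω t j1 = y := by
        by_cases hji : j1 = i0
        · left; rw [hji, hB]
        · right; exact hA j1 hj1 hji
      ext j
      simp only [hkNbr, Finset.mem_filter, Finset.mem_univ, true_and]
      obtain ⟨g, hjg⟩ := hcl j
      rw [hpos j g hjg]
      by_cases hgg : g = g0
      · subst hgg
        rw [if_pos rfl]
        constructor
        · intro _; exact hjg
        · intro _
          obtain ⟨hdl, hdr⟩ := abs_le.1 hd
          have hite : (if j = i0 then y + d else y) = y ∨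
              (if j = i0 then y + d else y) = y + d := by
            by_cases hji : j = i0
            · right; rw [if_pos hji]
            · left; rw [if_neg hji]
          rcases hite with h' | h' <;> rcases hx1 with h'' | h'' <;> rw [h', h''] <;>
            (rw [abs_le]; constructor <;> linarith)
      · rw [if_neg hgg]
        constructor
        · intro habs
          have hge : z ≤ xs g := hxsge g hgg
          have h3 : ε < xs g - x ω t j1 := by linarith
          have h4 : ε < |xs g - x ω t j1| := lt_of_lt_of_le h3 (le_abs_self _)
          linarith
        · intro hj; exact absurd (huniq hj hjg).symm hgg
    -- neighbourhood of members of other clusters in the free regime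
    have hnbrOther : ∀ (t : ℕ) (y d : ℝ),
        (∀ j ∈ Vg g0, j ≠ i0 → x ω t j = y) → (x ω t i0 = y + d) →
        (∀ g, g ≠ g0 → ∀ i ∈ Vg g, x ω t i = xs g) →
        ε < z - (y + d) → (2 ≤ k → ε < z - y) →
        ∀ g, g ≠ g0 → ∀ i ∈ Vg g, hkNbr ε (x ω t) i = Vg g := by
      intro t y d hA hB hC hf1 hf2 g hgne i hig
      have hpos := hposGen t y d hA hB hC
      have hxi : x ω t i = xs g := hC g hgne i hig
      have hgez : z ≤ xs g := hxsge g hgne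
      ext j
      simp only [hkNbr, Finset.mem_filter, Finset.mem_univ, true_and]
      obtain ⟨h, hjh⟩ := hcl j
      rw [hpos j h hjh, hxi]
      by_cases hh0 : h = g0
      · subst hh0
        rw [if_pos rfl]
        constructor
        · intro habs
          exfalso
          by_cases hji : j = i0
          · rw [if_pos hji] at habs
            have h3 : ε < xs g - (y + d) := by linarith
            have h4 : ε < |y + d - xs g| := by
              rw [abs_sub_comm]; exact lt_of_lt_of_le h3 (le_abs_self _)
            linarith
          · rw [if_neg hji] at habs
            have hk2 : 2 ≤ k := by
              rw [hkdef]
              exact Finset.one_lt_card.2 ⟨i0, hi0mem, j, hjh, fun h' => hji h'.symm⟩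
            have h3 : ε < xs g - y := by linarith [hf2 hk2]
            have h4 : ε < |y - xs g| := by
              rw [abs_sub_comm]; exact lt_of_lt_of_le h3 (le_abs_self _)
            linarith
        · intro hj
          exact absurd (huniq hjh hj).symm hgne
      · rw [if_neg hh0]
        by_cases hhg : h = g
        · subst hhg
          constructor
          · intro _; exact hjh
          · intro _; rw [sub_self, abs_zero]; exact hε.le
        · constructor
          · intro habs
            exfalso
            have := hsep g h (fun e => hhg e.symm)
            linarith
          · intro hj
            exact absurd (huniq hjh hj) hhg
    -- total opinion of cluster 0
    have hsumGen : ∀ (t : ℕ) (y d : ℝ),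
        (∀ j ∈ Vg g0, j ≠ i0 → x ω t j = y) → (x ω t i0 = y + d) →
        ∑ j ∈ Vg g0, x ω t j = (K - 1) * y + (y + d) := by
      intro t y d hA hB
      rw [← Finset.sum_erase_add _ _ hi0mem, hB]
      congr 1
      rw [Finset.sum_congr rfl
        (fun j hj => hA j (Finset.mem_of_mem_erase hj) (Finset.ne_of_mem_erase hj)),
        Finset.sum_const, Finset.card_erase_of_mem hi0mem, nsmul_eq_mul, ← hkdef,
        Nat.cast_sub hk1, Nat.cast_one, ← hKdef]
    -- one step in the free regime
    have step : ∀ (t : ℕ) (y d : ℝ),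
        (∀ j ∈ Vg g0, j ≠ i0 → x ω t j = y) → (x ω t i0 = y + d) →
        (∀ g, g ≠ g0 → ∀ i ∈ Vg g, x ω t i = xs g) →
        |d| ≤ ε → ε < z - (y + d) → (2 ≤ k → ε < z - y) →
        (∀ j ∈ Vg g0, j ≠ i0 → x ω (t+1) j = y + d / K) ∧
        (x ω (t+1) i0 = (y + d / K) + ξ t ω) ∧
        (∀ g, g ≠ g0 → ∀ i ∈ Vg g, x ω (t+1) i = xs g) := by
      intro t y d hA hB hC hd hf1 hf2
      have havg : (∑ j ∈ Vg g0, x ω t j) / ((Vg g0).card : ℝ) = y + d / K := by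
        rw [hsumGen t y d hA hB, ← hkdef, ← hKdef]
        field_simp
        ring
      refine ⟨?_, ?_, ?_⟩
      · intro j hj hjne
        have hk2 : 2 ≤ k := by
          rw [hkdef]
          exact Finset.one_lt_card.2 ⟨i0, hi0mem, j, hj, fun h' => hjne h'.symm⟩
        rw [hupd ω t j]
        simp only [hkStep]
        rw [hnbrMem0 t y d hA hB hC hd j hj (by rw [hA j hj hjne]; exact hf2 hk2)]
        rw [if_neg (hki j hjne), add_zero, havg]
      · rw [hupd ω t i0]
        simp only [hkStep]
        rw [hnbrMem0 t y d hA hB hC hd i0 hi0mem (by rw [hB]; exact hf1), havg]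
        norm_num
      · intro g hgne i hig
        rw [hupd ω t i]
        simp only [hkStep]
        rw [hnbrOther t y d hA hB hC hf1 hf2 g hgne i hig]
        rw [if_neg (hki i (hmemne hig hgne)), add_zero]
        rw [Finset.sum_congr rfl (fun j hj => hC g hgne j hj), Finset.sum_const,
          nsmul_eq_mul]
        have hcard : ((Vg g).card : ℝ) ≠ 0 := by
          exact_mod_cast (Finset.card_pos.2 (hVne g)).ne'
        field_simp
    -- the main induction: as long as we are in the free regime, the configuration
    -- is a cluster configuration
    have main : ∀ t : ℕ,
        (∀ s, s < t → (ε < z - (Y s + D s) ∧ (2 ≤ k → ε < z - Y s))) →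
        (∀ j ∈ Vg g0, j ≠ i0 → x ω t j = Y t) ∧ (x ω t i0 = Y t + D t) ∧
        (∀ g, g ≠ g0 → ∀ i ∈ Vg g, x ω t i = xs g) := by
      intro t
      induction t with
      | zero =>
        intro _
        have hYw : Y 0 = xs g0 := hY0.trans hwdef
        refine ⟨fun j hj _ => ?_, ?_, fun g hg i hi => hx0 ω g i hi⟩
        · exact (hx0 ω g0 j hj).trans hYw.symm
        · have : Y 0 + D 0 = xs g0 := by rw [hD0, add_zero]; exact hYw
          exact (hx0 ω g0 i0 hi0mem).trans this.symm
      | succ t ih =>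
        intro hfree
        obtain ⟨hA, hB, hC⟩ := ih (fun s hs => hfree s (Nat.lt_succ_of_lt hs))
        obtain ⟨hf1, hf2⟩ := hfree t (Nat.lt_succ_self t)
        obtain ⟨hA', hB', hC'⟩ := step t (Y t) (D t) hA hB hC (hDabs t) hf1 hf2
        have hYsucc : Y (t+1) = Y t + D t / K := by
          rcases t with _ | r
          · rw [hY1, hY0, hD0]; ring
          · rw [hYs r, hY (r+1), hDs r, hSs, add_div]
            simp only [Nat.add_sub_cancel]
            ring
        have hDsucc : D (t+1) = ξ t ω := hDs t
        rw [hYsucc, hDsucc]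
        exact ⟨hA', hB', hC'⟩
    -- the free regime must fail at some time
    have hexf : ∃ t : ℕ, ¬ (ε < z - (Y t + D t) ∧ (2 ≤ k → ε < z - Y t)) := by
      by_contra hcon
      push_neg at hcon
      obtain ⟨t0, ht0⟩ := h2 (K * (z - w))
      rw [← hS t0] at ht0
      rcases le_or_gt 2 k with hk2 | hk2
      · have hfr := (hcon (t0 + 1)).2 hk2
        have hYt : Y (t0+1) = w + S t0 / K := by
          rw [hY (t0+1)]
          simp only [Nat.add_sub_cancel]
        rw [hYt] at hfr
        have hdlt : S t0 / K < z - w - ε := by linarith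
        have hS' : S t0 < (z - w - ε) * K := (div_lt_iff₀ hKpos).1 hdlt
        nlinarith [mul_pos hε hKpos]
      · have hkeq : k = 1 := by omega
        have hKeq : K = 1 := by rw [hKdef, hkeq]; norm_num
        rcases t0 with _ | t1
        · rw [hS0, hKeq] at ht0
          nlinarith [hzw, hε]
        · have hfr := (hcon (t1 + 1)).1
          have hYD : Y (t1+1) + D (t1+1) = w + S (t1+1) := by
            rw [hY (t1+1), hDs t1, hSs, hKeq, div_one]
            simp only [Nat.add_sub_cancel]
            ring
          rw [hYD] at hfr
          rw [hKeq, one_mul] at ht0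
          linarith
    obtain ⟨τ, hτfail, hfreelt⟩ : ∃ τ : ℕ, ¬ (ε < z - (Y τ + D τ) ∧ (2 ≤ k → ε < z - Y τ)) ∧
        ∀ s, s < τ → (ε < z - (Y s + D s) ∧ (2 ≤ k → ε < z - Y s)) :=
      ⟨Nat.find hexf, Nat.find_spec hexf, fun s hs => not_not.1 (Nat.find_min hexf hs)⟩
    obtain ⟨hA, hB, hC⟩ := main τ hfreelt
    by_cases hcaseA : z - (Y τ + D τ) ≤ ε
    · refine ⟨τ, fun i hi => ?_⟩
      rw [hC g1 (Ne.symm hg01) i hi, hB]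
      show z - (Y τ + D τ) ≤ ε
      exact hcaseA
    · push_neg at hcaseA
      have hcaseB : 2 ≤ k ∧ z - Y τ ≤ ε := by
        have h2' : ¬ (2 ≤ k → ε < z - Y τ) := fun h => hτfail ⟨hcaseA, h⟩
        push_neg at h2'
        exact h2'
      obtain ⟨hk2, hclose⟩ := hcaseB
      have hDτ := hDb τ
      have hu : -δ1 ≤ ξ τ ω := (h1 τ).1
      have hpos := hposGen τ (Y τ) (D τ) hA hB hC
      -- neighbourhood of agent i0 at time τ: still just cluster 0
      have hnbr0 : hkNbr ε (x ω τ) i0 = Vg g0 :=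
        hnbrMem0 τ (Y τ) (D τ) hA hB hC (hDabs τ) i0 hi0mem (by rw [hB]; exact hcaseA)
      -- neighbourhood of members of cluster 1 at time τ
      have hnbr2 : ∀ i ∈ Vg g1, hkNbr ε (x ω τ) i = Vg g1 ∪ (Vg g0).erase i0 := by
        intro i hi
        have hxi : x ω τ i = z := hC g1 (Ne.symm hg01) i hi
        ext j
        simp only [hkNbr, Finset.mem_filter, Finset.mem_univ, true_and, Finset.mem_union,
          Finset.mem_erase]
        obtain ⟨h, hjh⟩ := hcl j
        rw [hpos j h hjh, hxi]
        by_cases hh0 : h = g0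
        · subst hh0
          rw [if_pos rfl]
          by_cases hji : j = i0
          · rw [if_pos hji]
            constructor
            · intro habs
              exfalso
              have h4 : ε < |Y τ + D τ - z| := by
                rw [abs_sub_comm]
                exact lt_of_lt_of_le hcaseA (le_abs_self _)
              linarith
            · rintro (hj | ⟨hne, _⟩)
              · exact absurd (huniq hjh (by rw [hji] at hjh ⊢; exact hjh)) (fun _ =>
                  hg01 (huniq hi0mem (hji ▸ hj)))
              · exact absurd hji hne
          · rw [if_neg hji]
            constructor
            · intro _
              exact Or.inr ⟨hji, hjh⟩
            · intro _
              rw [abs_le]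
              constructor <;> linarith [hDτ.1, hδ1ε, hcaseA, hclose]
        · rw [if_neg hh0]
          by_cases hh1 : h = g1
          · subst hh1
            constructor
            · intro _; exact Or.inl hjh
            · intro _
              rw [← hzdef, sub_self, abs_zero]
              exact hε.le
          · constructor
            · intro habs
              exfalso
              have hs := hsep g1 h (fun e => hh1 e.symm)
              rw [← hzdef] at hs
              linarith
            · rintro (hj | ⟨_, hj⟩)
              · exact absurd (huniq hjh hj) hh1
              · exact absurd (huniq hjh hj) hh0
      -- update formulas
      have hxi0' : x ω (τ+1) i0 = Y τ + D τ / K + ξ τ ω := by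
        rw [hupd ω τ i0]
        simp only [hkStep]
        rw [hnbr0, hsumGen τ (Y τ) (D τ) hA hB, ← hkdef, ← hKdef]
        rw [if_pos rfl]
        congr 1
        field_simp
        ring
      set M : ℝ := (m : ℝ) with hMdef
      have hM1 : (1:ℝ) ≤ M := by rw [hMdef]; exact_mod_cast hm1
      have hdisj2 : Disjoint (Vg g1) ((Vg g0).erase i0) :=
        Finset.disjoint_of_subset_right (Finset.erase_subset _ _) (hVdisj g1 g0 (Ne.symm hg01))
      have hK2 : (2:ℝ) ≤ K := by rw [hKdef]; exact_mod_cast hk2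
      have hden : (0:ℝ) < M + K - 1 := by linarith
      have hxi' : ∀ i ∈ Vg g1, x ω (τ+1) i = (M * z + (K - 1) * Y τ) / (M + K - 1) := by
        intro i hi
        rw [hupd ω τ i]
        simp only [hkStep]
        rw [hnbr2 i hi, if_neg (hki i (hmemne hi (Ne.symm hg01))), add_zero]
        have hsumu : ∑ j ∈ Vg g1 ∪ (Vg g0).erase i0, x ω τ j = M * z + (K - 1) * Y τ := by
          rw [Finset.sum_union hdisj2]
          congr 1
          · rw [Finset.sum_congr rfl (fun j hj => hC g1 (Ne.symm hg01) j hj),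
              Finset.sum_const, nsmul_eq_mul, ← hmdef, ← hMdef, ← hzdef]
          · rw [Finset.sum_congr rfl
              (fun j hj => hA j (Finset.mem_of_mem_erase hj) (Finset.ne_of_mem_erase hj)),
              Finset.sum_const, Finset.card_erase_of_mem hi0mem, nsmul_eq_mul, ← hkdef,
              Nat.cast_sub hk1, Nat.cast_one, ← hKdef]
        have hcardu : ((Vg g1 ∪ (Vg g0).erase i0).card : ℝ) = M + K - 1 := by
          rw [Finset.card_union_of_disjoint hdisj2, Finset.card_erase_of_mem hi0mem,
            Nat.cast_add, ← hkdef, ← hmdef, Nat.cast_sub hk1, Nat.cast_one, ← hKdef, ← hMdef]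
          ring
        rw [hsumu, hcardu]
      refine ⟨τ + 1, fun i hi => ?_⟩
      rw [hxi' i hi, hxi0']
      -- final arithmetic
      have hKMN : K + M ≤ N := by
        rw [hKdef, hMdef, hNdef]
        exact_mod_cast hkm
      have hδ1N : δ1 * (2 * N) ≤ ε := by
        have h' : δ1 * (2 * N) ≤ δ2 * (2 * N) :=
          mul_le_mul_of_nonneg_right hδ12 (by linarith)
        linarith
      have hd1 : -δ1 ≤ D τ := hDτ.1
      have he1 : (M * z + (K - 1) * Y τ) / (M + K - 1) - Y τ
          = M * (z - Y τ) / (M + K - 1) := by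
        field_simp
        ring
      have he2 : M * (z - Y τ) / (M + K - 1) ≤ M * ε / (M + K - 1) :=
        (div_le_div_iff_of_pos_right hden).2 (by nlinarith)
      have he3 : M * ε / (M + K - 1) ≤ ε - 2 * δ1 := by
        rw [div_le_iff₀ hden]
        nlinarith [mul_nonneg (by linarith : (0:ℝ) ≤ ε - δ1 * (2*N))
            (by linarith : (0:ℝ) ≤ K - 1),
          mul_nonneg hδ1 (mul_nonneg (by linarith : (0:ℝ) ≤ N)
            (by linarith : (0:ℝ) ≤ K - 2)),
          mul_nonneg hδ1 (by linarith : (0:ℝ) ≤ N - M - K + 1)]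
      have he4 : -δ1 ≤ D τ / K := by
        rw [le_div_iff₀ hKpos]
        nlinarith [mul_nonneg hδ1 (by linarith : (0:ℝ) ≤ K - 1)]
      linarith [he1, he2, he3, he4, hu]
  -- ## Probabilistic part
  -- the noise is almost surely within its support
  have hδsum : (0:ℝ) < δ1 + δ2 := by linarith
  have hcne0 : ENNReal.ofReal (δ1 + δ2) ≠ 0 := by
    simp only [ne_eq, ENNReal.ofReal_eq_zero, not_le]
    linarith
  have hcnetop : ENNReal.ofReal (δ1 + δ2) ≠ ⊤ := ENNReal.ofReal_ne_top
  have hae1 : ∀ᵐ ω ∂P, ∀ s, ξ s ω ∈ Set.Icc (-δ1) δ2 := by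
    rw [ae_all_iff]
    intro s
    have hpre : P (ξ s ⁻¹' (Set.Icc (-δ1) δ2)ᶜ) = 0 := by
      rw [← Measure.map_apply (hξmeas s) measurableSet_Icc.compl, hunif s,
        Measure.smul_apply, Measure.restrict_apply measurableSet_Icc.compl]
      simp [Set.compl_inter_self]
    rw [ae_iff]
    refine measure_mono_null ?_ hpre
    intro ω hω
    exact hω
  -- integrability and nonnegative mean of the noise
  have hInt : ∀ s, Integrable (ξ s) P := by
    intro s
    have h0 : Integrable id ((ENNReal.ofReal (δ1+δ2))⁻¹ • volume.restrict (Set.Icc (-δ1) δ2)) := by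
      refine Integrable.smul_measure ?_ (by simpa using hcne0)
      exact continuous_id.integrableOn_Icc
    rw [← hunif s] at h0
    simpa using (integrable_map_measure aestronglyMeasurable_id (hξmeas s).aemeasurable).1 h0
  have hMean : ∀ s, 0 ≤ ∫ ω, ξ s ω ∂P := by
    intro s
    have hmap : ∫ ω, ξ s ω ∂P = ∫ y, y ∂(Measure.map (ξ s) P) :=
      (integral_map (hξmeas s).aemeasurable aestronglyMeasurable_id).symm
    rw [hmap, hunif s, integral_smul_measure]
    apply mul_nonneg ENNReal.toReal_nonneg
    have hIoc : ∫ y in Set.Icc (-δ1) δ2, y = ∫ y in (-δ1)..δ2, y := by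
      rw [_root_.intervalIntegral.integral_of_le (by linarith : -δ1 ≤ δ2)]
      exact integral_Icc_eq_integral_Ioc
    have hid : ∫ y in (-δ1)..δ2, y = (δ2^2 - (-δ1)^2)/2 := by
      open intervalIntegral in exact integral_id
    rw [show (∫ y, y ∂(volume.restrict (Set.Icc (-δ1) δ2))) = ∫ y in Set.Icc (-δ1) δ2, y
        from rfl, hIoc, hid]
    nlinarith
  -- the partial sums form a submartingale with bounded increments
  have hξsm : ∀ s, StronglyMeasurable (ξ s) := fun s => (hξmeas s).stronglyMeasurable
  set ℱ := MeasureTheory.Filtration.natural ξ hξsm with hFdef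
  set f : ℕ → Ω → ℝ := fun t ω => ∑ s ∈ Finset.range (t+1), ξ s ω with hfdef
  have hAdap : StronglyAdapted ℱ f := by
    intro t
    refine Finset.stronglyMeasurable_fun_sum _ (fun s hs => ?_)
    have hst : s ≤ t := Nat.lt_succ_iff.1 (Finset.mem_range.1 hs)
    exact ((Filtration.stronglyAdapted_natural hξsm) s).mono (ℱ.mono hst)
  have hIntf : ∀ t, Integrable (f t) P := fun t => integrable_finset_sum _ (fun s _ => hInt s)
  have hSub : Submartingale f ℱ P := by
    refine submartingale_nat hAdap hIntf (fun t => ?_)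
    have hstep : f (t+1) = f t + ξ (t+1) := by
      funext ω
      rw [hfdef]
      simp only []
      rw [Finset.sum_range_succ]
      rfl
    have hce1 : P[f (t+1)|ℱ t] =ᵐ[P] P[f t|ℱ t] + P[ξ (t+1)|ℱ t] := by
      rw [hstep]
      exact condExp_add (hIntf t) (hInt (t+1)) _
    have hce2 : P[f t|ℱ t] = f t :=
      condExp_of_stronglyMeasurable (ℱ.le t) (hAdap t) (hIntf t)
    have hce3 : P[ξ (t+1)|ℱ t] =ᵐ[P] fun _ => ∫ ω', ξ (t+1) ω' ∂P :=
      ProbabilityTheory.iIndepFun.condExp_natural_ae_eq_of_lt hξsm hindep (Nat.lt_succ_self t)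
    filter_upwards [hce1, hce3] with ω hω1 hω3
    rw [hω1, Pi.add_apply, hce2, hω3]
    have := hMean (t+1)
    linarith
  have hbdd : ∀ᵐ ω ∂P, ∀ i, |f (i+1) ω - f i ω| ≤ ((δ2.toNNReal : ℝ≥0) : ℝ) := by
    filter_upwards [hae1] with ω hω i
    have hinc : f (i+1) ω - f i ω = ξ (i+1) ω := by
      rw [hfdef]
      simp only []
      rw [Finset.sum_range_succ]
      ring
    rw [hinc, Real.coe_toNNReal _ hδ2pos.le]
    obtain ⟨hl, hr⟩ := hω (i+1)
    rw [abs_le]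
    exact ⟨by linarith, hr⟩
  have hconv := hSub.bddAbove_iff_exists_tendsto hbdd
  -- manual second Borel–Cantelli: infinitely many large noises a.s.
  set q : ℝ≥0∞ := (ENNReal.ofReal (δ1 + δ2))⁻¹ * ENNReal.ofReal (δ2/2 + δ1) with hqdef
  have hqs : ∀ s, P (ξ s ⁻¹' Set.Iio (δ2/2)) = q := by
    intro s
    rw [← Measure.map_apply (hξmeas s) measurableSet_Iio, hunif s,
      Measure.smul_apply, Measure.restrict_apply measurableSet_Iio]
    have hset : Set.Iio (δ2/2) ∩ Set.Icc (-δ1) δ2 = Set.Ico (-δ1) (δ2/2) := by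
      ext y
      constructor
      · rintro ⟨hy1, hy2⟩
        rw [Set.mem_Iio] at hy1
        rw [Set.mem_Icc] at hy2
        exact Set.mem_Ico.2 ⟨hy2.1, hy1⟩
      · intro hy
        rw [Set.mem_Ico] at hy
        exact ⟨Set.mem_Iio.2 hy.2, Set.mem_Icc.2 ⟨hy.1, by linarith⟩⟩
    rw [hset, Real.volume_Ico, hqdef, smul_eq_mul]
    congr 2
    ring
  have hqlt : q < 1 := by
    have hq2 : q = ENNReal.ofReal (δ2/2 + δ1) / ENNReal.ofReal (δ1 + δ2) := by
      rw [hqdef, ENNReal.div_eq_inv_mul]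
    rw [hq2, ENNReal.div_lt_iff (Or.inl hcne0) (Or.inl hcnetop), one_mul]
    exact ENNReal.ofReal_lt_ofReal_iff hδsum |>.2 (by linarith)
  have hblock : ∀ NN MM : ℕ,
      P (⋂ t ∈ Finset.Icc NN (NN+MM), ξ t ⁻¹' Set.Iio (δ2/2)) = q ^ (MM+1) := by
    intro NN MM
    rw [hindep.meas_biInter (fun t _ => ⟨Set.Iio (δ2/2), measurableSet_Iio, rfl⟩)]
    rw [Finset.prod_congr rfl (fun t _ => hqs t), Finset.prod_const]
    congr 1
    rw [Nat.card_Icc]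
    omega
  have htail : ∀ NN : ℕ, P (⋂ t ∈ {t : ℕ | NN ≤ t}, ξ t ⁻¹' Set.Iio (δ2/2)) = 0 := by
    intro NN
    have hle : ∀ MM : ℕ,
        P (⋂ t ∈ {t : ℕ | NN ≤ t}, ξ t ⁻¹' Set.Iio (δ2/2)) ≤ q ^ (MM+1) := by
      intro MM
      rw [← hblock NN MM]
      apply measure_mono
      intro ω hω
      simp only [Set.mem_iInter] at hω ⊢
      intro t ht
      exact hω t (Finset.mem_Icc.1 ht).1
    have h0 : Tendsto (fun MM : ℕ => q ^ (MM+1)) atTop (nhds 0) :=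
      (ENNReal.tendsto_pow_atTop_nhds_zero_of_lt_one hqlt).comp (tendsto_add_atTop_nat 1)
    exact le_antisymm (ge_of_tendsto h0 (Filter.Eventually.of_forall hle)) zero_le
  have hae2 : ∀ᵐ ω ∂P, ∀ NN : ℕ, ∃ t, NN ≤ t ∧ δ2/2 ≤ ξ t ω := by
    have hUnull : P (⋃ NN : ℕ, ⋂ t ∈ {t : ℕ | NN ≤ t}, ξ t ⁻¹' Set.Iio (δ2/2)) = 0 :=
      measure_iUnion_null htail
    rw [ae_iff]
    refine measure_mono_null ?_ hUnull
    intro ω hω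
    simp only [Set.mem_setOf_eq] at hω
    push_neg at hω
    obtain ⟨NN, hNN⟩ := hω
    refine Set.mem_iUnion.2 ⟨NN, ?_⟩
    simp only [Set.mem_iInter, Set.mem_preimage, Set.mem_Iio]
    intro t ht
    exact hNN t ht
  -- combine: a.s. the partial sums are unbounded above
  have hfinal : ∀ᵐ ω ∂P, ∃ t : ℕ, ∀ i ∈ Vg g1, x ω t i - x ω t i0 ≤ ε := by
    filter_upwards [hae1, hconv, hae2] with ω hι hcv hio
    refine key ω hι ?_
    intro C
    by_contra hC
    push_neg at hC
    have hbddA : BddAbove (Set.range fun t => f t ω) := by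
      refine ⟨C, ?_⟩
      rintro y ⟨t, rfl⟩
      exact le_of_lt (hC (t+1))
    obtain ⟨c, hc⟩ := hcv.1 hbddA
    have h1' : Tendsto (fun t => f (t+1) ω) atTop (nhds c) :=
      hc.comp (tendsto_add_atTop_nat 1)
    have hninc : Tendsto (fun t => ξ (t+1) ω) atTop (nhds 0) := by
      have hsb := h1'.sub hc
      rw [sub_self] at hsb
      refine hsb.congr (fun t => ?_)
      rw [hfdef]
      simp only []
      rw [Finset.sum_range_succ]
      ring
    obtain ⟨NN, hNN⟩ := Metric.tendsto_atTop.1 hninc (δ2/2) (by positivity)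
    obtain ⟨t, htN, ht⟩ := hio (NN+1)
    obtain ⟨s, rfl⟩ : ∃ s, t = s + 1 := ⟨t - 1, by omega⟩
    have hs : NN ≤ s := by omega
    have := hNN s hs
    rw [Real.dist_eq, sub_zero] at this
    have habs := le_abs_self (ξ (s+1) ω)
    linarith
  -- conclude
  have hnull : P ({ω | ∃ t : ℕ, ∀ i ∈ Vg g1, x ω t i - x ω t i0 ≤ ε}ᶜ) = 0 := by
    rw [ae_iff] at hfinal
    refine measure_mono_null ?_ hfinal
    intro ω hω
    exact hω
  refine le_antisymm prob_le_one ?_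
  have hsplit := measure_union_le (μ := P)
    {ω | ∃ t : ℕ, ∀ i ∈ Vg g1, x ω t i - x ω t i0 ≤ ε}
    ({ω | ∃ t : ℕ, ∀ i ∈ Vg g1, x ω t i - x ω t i0 ≤ ε}ᶜ)
  rw [Set.union_compl_self, hnull, add_zero] at hsplit
  calc (1 : ℝ≥0∞) = P Set.univ := measure_univ.symm
    _ ≤ P {ω | ∃ t : ℕ, ∀ i ∈ Vg g1, x ω t i - x ω t i0 ≤ ε} := hsplit
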